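/- Let K be a finite abstract simplicial complex on a finite linearly ordered vertex set V, and let K̂ = K ∪ {∅} (the simplices of K together with the empty face), with m = |K̂|. Call σ ∈ K̂ a leaf if there is no vertex v ∈ V with v strictly greater than every element of σ and σ ∪ {v} ∈ K. Then the number of leaves of K̂ is at least m/2. (Equivalently: at least half the nodes of the Simplex Tree of K are leaves.) -/

import Mathlib

/-- An abstract simplicial complex on vertex type `V`, given as a finite
collection of nonempty finite subsets of `V` closed under taking nonempty subsets. -/
def IsSimplicialComplex {V : Type*} [DecidableEq V] (K : Finset (Finset V)) : Prop :=
  (∀ σ ∈ K, σ ≠ ∅) ∧ ∀ σ ∈ K, ∀ τ, τ ⊆ σ → τ ≠ ∅ → τ ∈ K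

theorem stmt3 {V : Type*} [Fintype V] [LinearOrder V]
    (K : Finset (Finset V)) (hK : IsSimplicialComplex K) :
    ((insert (∅ : Finset V) K).card : ℝ) / 2 ≤
      (((insert (∅ : Finset V) K).filter
          (fun σ => ¬ ∃ v : V, (∀ w ∈ σ, w < v) ∧ insert v σ ∈ K)).card : ℝ) := by
  classical
  set S := insert (∅ : Finset V) K with hS
  set Q : Finset V → Prop := fun σ => ∃ v : V, (∀ w ∈ σ, w < v) ∧ insert v σ ∈ K with hQ
  set T : Finset V → Finset V := fun σ =>
    Finset.univ.filter (fun v => (∀ w ∈ σ, w < v) ∧ insert v σ ∈ K) with hT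
  have hTne : ∀ σ, Q σ → (T σ).Nonempty := by
    rintro σ ⟨v, hv⟩
    exact ⟨v, by rw [hT]; exact Finset.mem_filter.2 ⟨Finset.mem_univ _, hv⟩⟩
  set f : Finset V → Finset V := fun σ =>
    if h : (T σ).Nonempty then insert ((T σ).max' h) σ else σ with hf
  -- key inequality: #nonleaves ≤ #leaves
  have key : (S.filter (fun σ => Q σ)).card ≤ (S.filter (fun σ => ¬ Q σ)).card := by
    apply Finset.card_le_card_of_injOn f
    · intro σ hσ
      rw [Finset.mem_coe, Finset.mem_filter] at hσ
      obtain ⟨hσS, hσQ⟩ := hσ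
      have hne := hTne σ hσQ
      set v := (T σ).max' hne with hv
      have hvmem : v ∈ T σ := (T σ).max'_mem hne
      rw [hT, Finset.mem_filter] at hvmem
      obtain ⟨-, hlt, hins⟩ := hvmem
      rw [Finset.mem_coe, Finset.mem_filter]
      constructor
      · simp only [hf, dif_pos hne]
        exact Finset.mem_insert_of_mem hins
      · -- f σ is a leaf
        simp only [hf, dif_pos hne]
        rintro ⟨w, hw1, hw2⟩
        have hvw : v < w := hw1 v (Finset.mem_insert_self _ _)
        have hsub : insert w σ ⊆ insert w (insert v σ) := by
          intro x hx
          rcases Finset.mem_insert.1 hx with h | h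
          · exact Finset.mem_insert.2 (Or.inl h)
          · exact Finset.mem_insert_of_mem (Finset.mem_insert_of_mem h)
        have : insert w σ ∈ K := hK.2 _ hw2 _ hsub (Finset.insert_ne_empty _ _)
        have hwT : w ∈ T σ := by
          rw [hT, Finset.mem_filter]
          refine ⟨Finset.mem_univ _, fun u hu => ?_, this⟩
          exact lt_trans (hlt u hu) hvw
        exact absurd ((T σ).le_max' w hwT) (not_le.2 hvw)
    · intro σ₁ hσ₁ σ₂ hσ₂ hfeq
      simp only [Finset.coe_filter, Set.mem_setOf_eq] at hσ₁ hσ₂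
      have h1 := hTne σ₁ hσ₁.2
      have h2 := hTne σ₂ hσ₂.2
      set v₁ := (T σ₁).max' h1 with hv₁
      set v₂ := (T σ₂).max' h2 with hv₂
      have hm1 : v₁ ∈ T σ₁ := (T σ₁).max'_mem h1
      have hm2 : v₂ ∈ T σ₂ := (T σ₂).max'_mem h2
      rw [hT, Finset.mem_filter] at hm1 hm2
      have hlt1 := hm1.2.1
      have hlt2 := hm2.2.1
      have hnm1 : v₁ ∉ σ₁ := fun h => lt_irrefl v₁ (hlt1 v₁ h)
      have hnm2 : v₂ ∉ σ₂ := fun h => lt_irrefl v₂ (hlt2 v₂ h)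
      simp only [hf, dif_pos h1, dif_pos h2, ← hv₁, ← hv₂] at hfeq
      -- v₁ is the max of insert v₁ σ₁, likewise v₂; equality of sets forces v₁ = v₂
      have hne1 : (insert v₁ σ₁).Nonempty := Finset.insert_nonempty _ _
      have hmax1 : (insert v₁ σ₁).max' hne1 = v₁ := by
        apply le_antisymm
        · apply Finset.max'_le
          intro y hy
          rcases Finset.mem_insert.1 hy with h | h
          · exact h.le
          · exact (hlt1 y h).le
        · exact Finset.le_max' _ _ (Finset.mem_insert_self _ _)
      have hne2 : (insert v₂ σ₂).Nonempty := Finset.insert_nonempty _ _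
      have hmax2 : (insert v₂ σ₂).max' hne2 = v₂ := by
        apply le_antisymm
        · apply Finset.max'_le
          intro y hy
          rcases Finset.mem_insert.1 hy with h | h
          · exact h.le
          · exact (hlt2 y h).le
        · exact Finset.le_max' _ _ (Finset.mem_insert_self _ _)
      have hveq : v₁ = v₂ := by
        rw [← hmax1, ← hmax2]
        simp only [hfeq]
      have hσeq : σ₁ = σ₂ := by
        have e1 : (insert v₁ σ₁).erase v₁ = σ₁ := Finset.erase_insert hnm1
        have e2 : (insert v₂ σ₂).erase v₂ = σ₂ := Finset.erase_insert hnm2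
        rw [← e1, hfeq, hveq]
        exact e2
      exact hσeq
  have hsplit : S.card = (S.filter (fun σ => ¬ Q σ)).card + (S.filter (fun σ => Q σ)).card := by
    rw [add_comm, Finset.card_filter_add_card_filter_not]
  have hcard : S.card ≤ 2 * (S.filter (fun σ => ¬ Q σ)).card := by omega
  have : (S.card : ℝ) ≤ 2 * ((S.filter (fun σ => ¬ Q σ)).card : ℝ) := by
    exact_mod_cast hcard
  linarith
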